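/- Let N : ℕ, let A, P : Matrix (Fin N) (Fin N) ℝ with P symmetric (P = Pᵀ). Let ρ > 0, μ ∈ (0, ρ), ℓ ≥ 0, w_max ≥ 0, μ* ≥ 1, β > 0, and set θ := μ*·(2ρ+μ) + (ρ−μ) and Γ := μ*²·w_max²/(ρ−μ) + μ*·ℓ²/μ. Assume: (a) P − 1 is positive semidefinite and μ*·1 − P is positive semidefinite; (b) the LMI holds: −(Aᵀ*P + P*A) − θ·1 − β·P is positive semidefinite; (c) g : (Fin N → ℝ) → ℝ → (Fin N → ℝ) satisfies ‖g y t‖ ≤ ρ·‖y‖ + ℓ for all y, t (Euclidean norm); (d) w : ℝ → (Fin N → ℝ) satisfies ‖w t‖ ≤ w_max for all t; (e) x : ℝ → (Fin N → ℝ) satisfies, for every t ≥ 0, HasDerivAt x (A *ᵥ x t + g (x t) t + w t) t. Then for every t ≥ 0, the Lyapunov function V(y) := y ⬝ᵥ (P *ᵥ y) satisfies V(x t) ≤ Real.exp (−β·t) · V(x 0) + Γ/β. -/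

import Mathlib

open Matrix

/-- Euclidean norm on `Fin N → ℝ`. -/
noncomputable def eucNorm {N : ℕ} (y : Fin N → ℝ) : ℝ :=
  Real.sqrt (∑ i, y i ^ 2)

lemma psd_apply {N : ℕ} {M : Matrix (Fin N) (Fin N) ℝ} (h : M.PosSemidef)
    (y : Fin N → ℝ) : 0 ≤ y ⬝ᵥ (M *ᵥ y) := by
  simpa using h.dotProduct_mulVec_nonneg y

lemma eucNorm_nonneg {N : ℕ} (y : Fin N → ℝ) : 0 ≤ eucNorm y := Real.sqrt_nonneg _

lemma eucNorm_sq {N : ℕ} (y : Fin N → ℝ) : eucNorm y ^ 2 = y ⬝ᵥ y := by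
  rw [eucNorm, Real.sq_sqrt (Finset.sum_nonneg fun i _ => sq_nonneg _)]
  simp [dotProduct, sq]

lemma eucNorm_eq_zero {N : ℕ} {y : Fin N → ℝ} (h : eucNorm y = 0) : y = 0 := by
  have : ∑ i, y i ^ 2 = 0 := by
    have := eucNorm_sq y
    rw [h] at this
    simp [dotProduct, sq] at this ⊢
    simpa [dotProduct, sq] using this.symm
  funext i
  have := (Finset.sum_eq_zero_iff_of_nonneg (fun i _ => sq_nonneg (y i))).1 this i (Finset.mem_univ i)
  exact pow_eq_zero_iff (n := 2) (by norm_num) |>.1 this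

lemma young {N : ℕ} {P : Matrix (Fin N) (Fin N) ℝ}
    (hP : ∀ z : Fin N → ℝ, 0 ≤ z ⬝ᵥ (P *ᵥ z)) {c : ℝ} (hc : 0 < c)
    (y v : Fin N → ℝ) :
    y ⬝ᵥ (P *ᵥ v) + v ⬝ᵥ (P *ᵥ y) ≤ c * (y ⬝ᵥ (P *ᵥ y)) + c⁻¹ * (v ⬝ᵥ (P *ᵥ v)) := by
  have h := hP (c • y - v)
  rw [Matrix.mulVec_sub, Matrix.mulVec_smul, sub_dotProduct, smul_dotProduct,
    dotProduct_sub, dotProduct_smul, dotProduct_sub, dotProduct_smul] at h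
  simp only [smul_eq_mul] at h
  have hc' : c ≠ 0 := ne_of_gt hc
  rw [← sub_nonneg]
  have key : c * (y ⬝ᵥ (P *ᵥ y)) + c⁻¹ * (v ⬝ᵥ (P *ᵥ v)) - (y ⬝ᵥ (P *ᵥ v) + v ⬝ᵥ (P *ᵥ y))
      = c⁻¹ * (c * (c * (y ⬝ᵥ (P *ᵥ y)) - y ⬝ᵥ (P *ᵥ v)) - (c * (v ⬝ᵥ (P *ᵥ y)) - v ⬝ᵥ (P *ᵥ v))) := by
    field_simp
    ring
  rw [key]
  exact mul_nonneg (inv_nonneg.2 hc.le) h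

lemma cs {N : ℕ} {P : Matrix (Fin N) (Fin N) ℝ} {μs : ℝ} (hμs : 0 ≤ μs)
    (hP : ∀ z : Fin N → ℝ, 0 ≤ z ⬝ᵥ (P *ᵥ z))
    (hUp : ∀ z : Fin N → ℝ, z ⬝ᵥ (P *ᵥ z) ≤ μs * (z ⬝ᵥ z))
    (y v : Fin N → ℝ) :
    y ⬝ᵥ (P *ᵥ v) + v ⬝ᵥ (P *ᵥ y) ≤ 2 * μs * eucNorm y * eucNorm v := by
  rcases eq_or_lt_of_le (eucNorm_nonneg y) with hy | hy
  · rw [eucNorm_eq_zero hy.symm]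
    simp [eucNorm]
  rcases eq_or_lt_of_le (eucNorm_nonneg v) with hv | hv
  · rw [eucNorm_eq_zero hv.symm]
    simp [eucNorm]
  have hc : 0 < eucNorm v / eucNorm y := div_pos hv hy
  have h1 := young hP hc y v
  have h2 : eucNorm v / eucNorm y * (y ⬝ᵥ (P *ᵥ y)) ≤ eucNorm v / eucNorm y * (μs * eucNorm y ^ 2) := by
    rw [eucNorm_sq]; exact mul_le_mul_of_nonneg_left (hUp y) hc.le
  have h3 : (eucNorm v / eucNorm y)⁻¹ * (v ⬝ᵥ (P *ᵥ v)) ≤ (eucNorm v / eucNorm y)⁻¹ * (μs * eucNorm v ^ 2) := by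
    rw [eucNorm_sq]; exact mul_le_mul_of_nonneg_left (hUp v) (inv_nonneg.2 hc.le)
  have e2 : eucNorm v / eucNorm y * (μs * eucNorm y ^ 2) = μs * eucNorm y * eucNorm v := by
    field_simp
  have e3 : (eucNorm v / eucNorm y)⁻¹ * (μs * eucNorm v ^ 2) = μs * eucNorm y * eucNorm v := by
    field_simp
  linarith

lemma bilin_id {N : ℕ} (A P : Matrix (Fin N) (Fin N) ℝ) (y : Fin N → ℝ) :
    (A *ᵥ y) ⬝ᵥ (P *ᵥ y) + y ⬝ᵥ (P *ᵥ (A *ᵥ y)) = y ⬝ᵥ ((Aᵀ * P + P * A) *ᵥ y) := by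
  rw [Matrix.add_mulVec, dotProduct_add, ← Matrix.mulVec_mulVec, ← Matrix.mulVec_mulVec,
    Matrix.dotProduct_mulVec y Aᵀ, Matrix.vecMul_transpose]

lemma key_ineq {N : ℕ} (A P : Matrix (Fin N) (Fin N) ℝ)
    (ρ μ ℓ wmax μs β : ℝ)
    (hρ : 0 < ρ) (hμ : 0 < μ) (hμρ : μ < ρ)
    (hℓ : 0 ≤ ℓ) (hw : 0 ≤ wmax) (hμs : 1 ≤ μs) (hβ : 0 < β)
    (hP0 : ∀ z : Fin N → ℝ, 0 ≤ z ⬝ᵥ (P *ᵥ z))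
    (hUp : ∀ z : Fin N → ℝ, z ⬝ᵥ (P *ᵥ z) ≤ μs * (z ⬝ᵥ z))
    (hLMI : ∀ z : Fin N → ℝ, z ⬝ᵥ ((Aᵀ * P + P * A) *ᵥ z)
      ≤ -((μs * (2 * ρ + μ) + (ρ - μ)) * (z ⬝ᵥ z)) - β * (z ⬝ᵥ (P *ᵥ z)))
    (y gv wv : Fin N → ℝ)
    (hgv : eucNorm gv ≤ ρ * eucNorm y + ℓ) (hwv : eucNorm wv ≤ wmax) :
    (A *ᵥ y + gv + wv) ⬝ᵥ (P *ᵥ y) + y ⬝ᵥ (P *ᵥ (A *ᵥ y + gv + wv))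
      ≤ -β * (y ⬝ᵥ (P *ᵥ y)) + (μs ^ 2 * wmax ^ 2 / (ρ - μ) + μs * ℓ ^ 2 / μ) := by
  have hμs0 : (0:ℝ) < μs := lt_of_lt_of_le one_pos hμs
  set ny := eucNorm y with hny
  set ng := eucNorm gv with hng
  have hny0 : 0 ≤ ny := eucNorm_nonneg y
  have hng0 : 0 ≤ ng := eucNorm_nonneg gv
  -- expand LHS
  have expand : (A *ᵥ y + gv + wv) ⬝ᵥ (P *ᵥ y) + y ⬝ᵥ (P *ᵥ (A *ᵥ y + gv + wv))
      = y ⬝ᵥ ((Aᵀ * P + P * A) *ᵥ y)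
        + (y ⬝ᵥ (P *ᵥ gv) + gv ⬝ᵥ (P *ᵥ y))
        + (y ⬝ᵥ (P *ᵥ wv) + wv ⬝ᵥ (P *ᵥ y)) := by
    rw [← bilin_id]
    simp only [Matrix.mulVec_add, dotProduct_add, add_dotProduct]
    ring
  rw [expand]
  -- g term
  have hgterm : y ⬝ᵥ (P *ᵥ gv) + gv ⬝ᵥ (P *ᵥ y) ≤ 2 * μs * ny * ng :=
    cs hμs0.le hP0 hUp y gv
  have hgterm2 : 2 * μs * ny * ng ≤ μs * (2 * ρ + μ) * ny ^ 2 + μs * ℓ ^ 2 / μ := by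
    have h1 : 2 * μs * ny * ng ≤ 2 * μs * ny * (ρ * ny + ℓ) := by
      apply mul_le_mul_of_nonneg_left hgv
      positivity
    have h2 : 2 * ℓ * ny ≤ μ * ny ^ 2 + ℓ ^ 2 / μ := by
      have hd : ℓ ^ 2 / μ * μ = ℓ ^ 2 := div_mul_cancel₀ _ hμ.ne'
      nlinarith [sq_nonneg (μ * ny - ℓ)]
    have h3 := mul_le_mul_of_nonneg_left h2 hμs0.le
    have h4 : μs * ℓ ^ 2 / μ = μs * (ℓ ^ 2 / μ) := mul_div_assoc _ _ _
    nlinarith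
  -- w term
  have hc : 0 < (ρ - μ) / μs := div_pos (by linarith) hμs0
  have hwterm := young hP0 hc y wv
  have hwy : (ρ - μ) / μs * (y ⬝ᵥ (P *ᵥ y)) ≤ (ρ - μ) * ny ^ 2 := by
    have := hUp y
    rw [← eucNorm_sq] at this
    calc (ρ - μ) / μs * (y ⬝ᵥ (P *ᵥ y)) ≤ (ρ - μ) / μs * (μs * ny ^ 2) :=
          mul_le_mul_of_nonneg_left this hc.le
      _ = (ρ - μ) * ny ^ 2 := by field_simp
  have hww : ((ρ - μ) / μs)⁻¹ * (wv ⬝ᵥ (P *ᵥ wv)) ≤ μs ^ 2 * wmax ^ 2 / (ρ - μ) := by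
    have h1 : wv ⬝ᵥ (P *ᵥ wv) ≤ μs * wmax ^ 2 := by
      have h2 := hUp wv
      rw [← eucNorm_sq] at h2
      have h3 : eucNorm wv ^ 2 ≤ wmax ^ 2 := pow_le_pow_left₀ (eucNorm_nonneg wv) hwv 2
      nlinarith
    calc ((ρ - μ) / μs)⁻¹ * (wv ⬝ᵥ (P *ᵥ wv)) ≤ ((ρ - μ) / μs)⁻¹ * (μs * wmax ^ 2) :=
          mul_le_mul_of_nonneg_left h1 (inv_nonneg.2 hc.le)
      _ = μs ^ 2 * wmax ^ 2 / (ρ - μ) := by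
          rw [inv_div]
          field_simp
  -- LMI term
  have hlmi := hLMI y
  rw [← eucNorm_sq, ← hny] at hlmi
  linarith

lemma hasDerivAt_quad {N : ℕ} (P : Matrix (Fin N) (Fin N) ℝ)
    {x : ℝ → Fin N → ℝ} {d : Fin N → ℝ} {t : ℝ} (hx : HasDerivAt x d t) :
    HasDerivAt (fun s => x s ⬝ᵥ (P *ᵥ x s))
      (d ⬝ᵥ (P *ᵥ x t) + x t ⬝ᵥ (P *ᵥ d)) t := by
  have hxi : ∀ i, HasDerivAt (fun s => x s i) (d i) t := hasDerivAt_pi.1 hx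
  have : HasDerivAt (fun s => ∑ i, x s i * ∑ j, P i j * x s j)
      (∑ i, (d i * ∑ j, P i j * x t j + x t i * ∑ j, P i j * d j)) t := by
    apply HasDerivAt.fun_sum
    intro i _
    exact (hxi i).mul (HasDerivAt.fun_sum fun j _ => (hxi j).const_mul (P i j))
  have hfun : (fun s => x s ⬝ᵥ (P *ᵥ x s)) = fun s => ∑ i, x s i * ∑ j, P i j * x s j := by
    funext s; simp [dotProduct, Matrix.mulVec]
  have hval : d ⬝ᵥ (P *ᵥ x t) + x t ⬝ᵥ (P *ᵥ d)
      = ∑ i, (d i * ∑ j, P i j * x t j + x t i * ∑ j, P i j * d j) := by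
    simp [dotProduct, Matrix.mulVec, Finset.sum_add_distrib]
  rw [hfun, hval]; exact this
/-- β-exponential stability under dissipative perturbations: along
trajectories of `ẋ = Ax + g(x,t) + w(t)`, the Lyapunov function
`V(y) = yᵀPy` satisfies `V(x t) ≤ e^{−βt} V(x 0) + Γ/β`. -/
theorem beta_exponential_stability (N : ℕ)
    (A P : Matrix (Fin N) (Fin N) ℝ) (hPsym : P = Pᵀ)
    (ρ μ ℓ wmax μs β : ℝ)
    (hρ : 0 < ρ) (hμ : 0 < μ) (hμρ : μ < ρ)
    (hℓ : 0 ≤ ℓ) (hw : 0 ≤ wmax) (hμs : 1 ≤ μs) (hβ : 0 < β)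
    (hPlower : (P - 1).PosSemidef)
    (hPupper : (μs • (1 : Matrix (Fin N) (Fin N) ℝ) - P).PosSemidef)
    (hLMI : (-(Aᵀ * P + P * A)
        - (μs * (2 * ρ + μ) + (ρ - μ)) • (1 : Matrix (Fin N) (Fin N) ℝ)
        - β • P).PosSemidef)
    (g : (Fin N → ℝ) → ℝ → (Fin N → ℝ))
    (hg : ∀ (y : Fin N → ℝ) (t : ℝ), eucNorm (g y t) ≤ ρ * eucNorm y + ℓ)
    (w : ℝ → (Fin N → ℝ))
    (hw' : ∀ t : ℝ, eucNorm (w t) ≤ wmax)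
    (x : ℝ → (Fin N → ℝ))
    (hx : ∀ t : ℝ, 0 ≤ t → HasDerivAt x (A *ᵥ x t + g (x t) t + w t) t) :
    ∀ t : ℝ, 0 ≤ t →
      x t ⬝ᵥ (P *ᵥ x t)
        ≤ Real.exp (-β * t) * (x 0 ⬝ᵥ (P *ᵥ x 0))
          + (μs ^ 2 * wmax ^ 2 / (ρ - μ) + μs * ℓ ^ 2 / μ) / β := by
  intro t ht
  have dotself : ∀ z : Fin N → ℝ, 0 ≤ z ⬝ᵥ z :=
    fun z => Finset.sum_nonneg fun i _ => mul_self_nonneg _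
  have hP0 : ∀ z : Fin N → ℝ, 0 ≤ z ⬝ᵥ (P *ᵥ z) := by
    intro z
    have h := psd_apply hPlower z
    rw [Matrix.sub_mulVec, dotProduct_sub, Matrix.one_mulVec] at h
    linarith [dotself z]
  have hUp : ∀ z : Fin N → ℝ, z ⬝ᵥ (P *ᵥ z) ≤ μs * (z ⬝ᵥ z) := by
    intro z
    have h := psd_apply hPupper z
    rw [Matrix.sub_mulVec, dotProduct_sub, Matrix.smul_mulVec, Matrix.one_mulVec,
      dotProduct_smul, smul_eq_mul] at h
    linarith
  have hLMI' : ∀ z : Fin N → ℝ, z ⬝ᵥ ((Aᵀ * P + P * A) *ᵥ z)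
      ≤ -((μs * (2 * ρ + μ) + (ρ - μ)) * (z ⬝ᵥ z)) - β * (z ⬝ᵥ (P *ᵥ z)) := by
    intro z
    have h := psd_apply hLMI z
    rw [Matrix.sub_mulVec, Matrix.sub_mulVec, Matrix.neg_mulVec, Matrix.smul_mulVec,
      Matrix.smul_mulVec, Matrix.one_mulVec, dotProduct_sub, dotProduct_sub,
      dotProduct_neg, dotProduct_smul, dotProduct_smul, smul_eq_mul, smul_eq_mul] at h
    linarith
  set Γ : ℝ := μs ^ 2 * wmax ^ 2 / (ρ - μ) + μs * ℓ ^ 2 / μ with hΓdef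
  have hΓ0 : 0 ≤ Γ := by
    apply add_nonneg
    · exact div_nonneg (by positivity) (by linarith)
    · positivity
  set V : ℝ → ℝ := fun s => x s ⬝ᵥ (P *ᵥ x s) with hVdef
  have hVt : ∀ s : ℝ, V s = x s ⬝ᵥ (P *ᵥ x s) := fun s => rfl
  set D : ℝ → ℝ := fun s =>
    (A *ᵥ x s + g (x s) s + w s) ⬝ᵥ (P *ᵥ x s)
      + x s ⬝ᵥ (P *ᵥ (A *ᵥ x s + g (x s) s + w s)) with hDdef
  set u : ℝ → ℝ := fun s => Real.exp (β * s) * V s - Γ / β * (Real.exp (β * s) - 1) with hudef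
  have hVd : ∀ s : ℝ, 0 ≤ s → HasDerivAt V (D s) s :=
    fun s hs => hasDerivAt_quad P (hx s hs)
  have hud : ∀ s : ℝ, 0 ≤ s → HasDerivAt u
      (Real.exp (β * s) * β * V s + Real.exp (β * s) * D s
        - Γ / β * (Real.exp (β * s) * β)) s := by
    intro s hs
    have hE : HasDerivAt (fun r => Real.exp (β * r)) (Real.exp (β * s) * β) s := by
      simpa using ((hasDerivAt_id s).const_mul β).exp
    exact (hE.mul (hVd s hs)).sub ((hE.sub_const 1).const_mul (Γ / β))
  have hderiv_le : ∀ s ∈ interior (Set.Ici (0:ℝ)), deriv u s ≤ 0 := by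
    intro s hs
    rw [interior_Ici] at hs
    have hs' : (0:ℝ) ≤ s := le_of_lt hs
    rw [(hud s hs').deriv]
    have hkey := key_ineq A P ρ μ ℓ wmax μs β hρ hμ hμρ hℓ hw hμs hβ hP0 hUp hLMI'
      (x s) (g (x s) s) (w s) (hg (x s) s) (hw' s)
    have hE0 : (0:ℝ) < Real.exp (β * s) := Real.exp_pos _
    have h1 : Real.exp (β * s) * D s ≤ Real.exp (β * s) * (-β * V s + Γ) :=
      mul_le_mul_of_nonneg_left hkey hE0.le
    have h2 : Real.exp (β * s) * (-β * V s + Γ)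
        = -(Real.exp (β * s) * β * V s) + Γ * Real.exp (β * s) := by ring
    have h3 : Γ / β * (Real.exp (β * s) * β) = Γ * Real.exp (β * s) := by
      field_simp
    rw [h3]
    nlinarith [h1, h2]
  have hcont : ContinuousOn u (Set.Ici (0:ℝ)) := by
    have hxc : ContinuousOn x (Set.Ici (0:ℝ)) :=
      fun s hs => (hx s hs).continuousAt.continuousWithinAt
    have hquad : Continuous fun y : Fin N → ℝ => y ⬝ᵥ (P *ᵥ y) := by
      simp only [dotProduct, Matrix.mulVec]
      exact continuous_finset_sum _ fun i _ => (continuous_apply i).mul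
        (continuous_finset_sum _ fun j _ => continuous_const.mul (continuous_apply j))
    have hVc : ContinuousOn V (Set.Ici (0:ℝ)) := hquad.comp_continuousOn hxc
    have hec : Continuous fun s : ℝ => Real.exp (β * s) :=
      Real.continuous_exp.comp (continuous_const.mul continuous_id)
    exact (hec.continuousOn.mul hVc).sub
      (continuousOn_const.mul (hec.continuousOn.sub continuousOn_const))
  have hdiff : DifferentiableOn ℝ u (interior (Set.Ici (0:ℝ))) := by
    rw [interior_Ici]
    exact fun s hs => ((hud s (le_of_lt hs)).differentiableAt).differentiableWithinAt
  have hanti := antitoneOn_of_deriv_nonpos (convex_Ici 0) hcont hdiff hderiv_le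
  have hut : u t ≤ u 0 := hanti Set.self_mem_Ici (Set.mem_Ici.2 ht) ht
  have hu0 : u 0 = V 0 := by simp [hudef]
  have hE0 : (0:ℝ) < Real.exp (β * t) := Real.exp_pos _
  have hΓβ : 0 ≤ Γ / β := div_nonneg hΓ0 hβ.le
  have h1 : Real.exp (β * t) * V t ≤ V 0 + Γ / β * Real.exp (β * t) := by
    have he : Γ / β * (Real.exp (β * t) - 1) = Γ / β * Real.exp (β * t) - Γ / β := by ring
    have hut' : Real.exp (β * t) * V t - Γ / β * (Real.exp (β * t) - 1) ≤ V 0 := by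
      rw [← hu0]; exact hut
    linarith
  have h2 : V t ≤ (Real.exp (β * t))⁻¹ * (V 0 + Γ / β * Real.exp (β * t)) := by
    have := mul_le_mul_of_nonneg_left h1 (inv_nonneg.2 hE0.le)
    rwa [← mul_assoc, inv_mul_cancel₀ hE0.ne', one_mul] at this
  have h3 : (Real.exp (β * t))⁻¹ * (V 0 + Γ / β * Real.exp (β * t))
      = Real.exp (-β * t) * V 0 + Γ / β := by
    rw [neg_mul, Real.exp_neg]
    field_simp
  rw [← hVt t, ← hVt 0]
  rw [h3] at h2
  exact h2
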